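/- Let (Ω, ℱ, P) be a probability space, W an integrable real random variable, and q a real number. For every measurable set E ⊆ Ω with P(E) = P(W > q), it holds that E[W·𝟙{W > q}] ≥ E[W·𝟙_E], i.e. the upper-tail event {W > q} maximizes the truncated expectation among all events of the same probability. -/

import Mathlib

open MeasureTheory

lemma aux_tail_max
    {Ω : Type*} [MeasurableSpace Ω] (P : Measure Ω) [IsProbabilityMeasure P]
    (W : Ω → ℝ) (hW : Integrable W P) (hWm : Measurable W) (q : ℝ)
    (E : Set Ω) (hE : MeasurableSet E)
    (hPE : P E = P {ω | W ω > q}) :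
    ∫ ω in {ω | W ω > q}, W ω ∂P ≥ ∫ ω in E, W ω ∂P := by
  set T := {ω | W ω > q} with hTdef
  have hT : MeasurableSet T := measurableSet_lt measurable_const hWm
  have hIT : IntegrableOn W T P := hW.integrableOn
  have hIE : IntegrableOn W E P := hW.integrableOn
  have h1 : ∫ ω in T ∩ E, W ω ∂P + ∫ ω in T \ E, W ω ∂P = ∫ ω in T, W ω ∂P :=
    integral_inter_add_diff hE hIT
  have h2 : ∫ ω in E ∩ T, W ω ∂P + ∫ ω in E \ T, W ω ∂P = ∫ ω in E, W ω ∂P :=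
    integral_inter_add_diff hT hIE
  have hcomm : T ∩ E = E ∩ T := Set.inter_comm _ _
  have hm1 : P (T ∩ E) + P (T \ E) = P T := measure_inter_add_diff T hE
  have hm2 : P (E ∩ T) + P (E \ T) = P E := measure_inter_add_diff E hT
  have hfin : P (T ∩ E) ≠ ⊤ := measure_ne_top _ _
  have hAB : P (T \ E) = P (E \ T) := by
    have : P (T ∩ E) + P (T \ E) = P (T ∩ E) + P (E \ T) := by
      rw [hm1, ← hPE, ← hm2, hcomm]
    exact (ENNReal.add_right_inj hfin).mp this
  have hlow : q * (P (T \ E)).toReal ≤ ∫ ω in T \ E, W ω ∂P := by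
    apply setIntegral_ge_of_const_le_real (hT.diff hE) (measure_ne_top _ _)
    · intro x hx
      exact le_of_lt hx.1
    · exact hW.integrableOn
  have hup : ∫ ω in E \ T, W ω ∂P ≤ q * (P (E \ T)).toReal := by
    have := setIntegral_mono_on hW.integrableOn (integrableOn_const (measure_ne_top P _))
      (hE.diff hT) (fun x hx => not_lt.mp hx.2 : ∀ x ∈ E \ T, W x ≤ q)
    simpa [setIntegral_const, mul_comm, measureReal_def] using this
  have htr : (P (T \ E)).toReal = (P (E \ T)).toReal := by rw [hAB]
  have : ∫ ω in E \ T, W ω ∂P ≤ ∫ ω in T \ E, W ω ∂P := by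
    calc ∫ ω in E \ T, W ω ∂P ≤ q * (P (E \ T)).toReal := hup
    _ = q * (P (T \ E)).toReal := by rw [htr]
    _ ≤ ∫ ω in T \ E, W ω ∂P := hlow
  have hce : ∫ ω in T ∩ E, W ω ∂P = ∫ ω in E ∩ T, W ω ∂P := by rw [hcomm]
  linarith

theorem upper_tail_maximizes_truncated_expectation
    {Ω : Type*} [MeasurableSpace Ω] (P : Measure Ω) [IsProbabilityMeasure P]
    (W : Ω → ℝ) (hW : Integrable W P) (q : ℝ)
    (E : Set Ω) (hE : MeasurableSet E)
    (hPE : P E = P {ω | W ω > q}) :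
    ∫ ω, Set.indicator {ω | W ω > q} W ω ∂P ≥ ∫ ω, Set.indicator E W ω ∂P := by
  set g := hW.1.mk W with hgdef
  have hgm : StronglyMeasurable g := hW.1.stronglyMeasurable_mk
  have heq : W =ᵐ[P] g := hW.1.ae_eq_mk
  have hgmeas : Measurable g := hgm.measurable
  have hgint : Integrable g P := (integrable_congr heq).mp hW
  have hsets : P {ω | W ω > q} = P {ω | g ω > q} := by
    apply measure_congr
    filter_upwards [heq] with ω hω
    show (W ω > q) = (g ω > q)
    rw [hω]
  have hindE : ∫ ω, Set.indicator E W ω ∂P = ∫ ω in E, g ω ∂P := by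
    rw [integral_indicator hE]
    exact setIntegral_congr_ae hE (heq.mono fun ω hω _ => hω)
  have hindT : ∫ ω, Set.indicator {ω | W ω > q} W ω ∂P = ∫ ω in {ω | g ω > q}, g ω ∂P := by
    have hT' : MeasurableSet {ω | g ω > q} := measurableSet_lt measurable_const hgmeas
    rw [← integral_indicator hT']
    apply integral_congr_ae
    filter_upwards [heq] with ω hω
    simp only [Set.indicator_apply, Set.mem_setOf_eq, hω]
  rw [hindE, hindT]
  exact aux_tail_max P g hgint hgmeas q E hE (hPE.trans hsets)
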